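/- Consider a linear dynamical system with x_0 = 0 and D = 0: x_{t+1} = A x_t + B u_t + w_t and y_t = C x_t + z_t, where the random vectors (u_t)_{t≥0}, (w_t)_{t≥0}, (z_t)_{t≥0} are mutually independent with mean zero and finite second moments, E[u_t u_t^⊤] = I_p, E[z_t z_t^⊤] = I_m, and E[w_t w_t^⊤] = Σ_w for every t. For an integer T ≥ 0, let ξ ∈ ℝ^{(p+m)(T+1)} be the vector obtained by stacking u_0, …, u_T followed by y_0, …, y_T. Then, writing P = P_T(A, B, C) and P_w = P_T(A, Σ_w^{1/2}, C), the covariance matrix satisfies E[ξ ξ^⊤] = [I; P][I, P^⊤] + [0; P_w][0, P_w^⊤] + blockdiag(0, I_{m(T+1)}), where I = I_{p(T+1)}. -/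

import Mathlib

open MeasureTheory ProbabilityTheory
open scoped ProbabilityTheory

/-- Embedding of `ℝ^d` into `ℕ → ℝ` (by zero padding), used to state mutual independence of
random vectors of different dimensions as independence of a single family. -/
def embedVec (d : ℕ) (v : Fin d → ℝ) : ℕ → ℝ :=
  fun i => if h : i < d then v ⟨i, h⟩ else 0

/-- The block lower-triangular matrix `P_T(A, B, C) ∈ ℝ^{m(T+1) × p(T+1)}` whose `(i, j)` block
(for `0 ≤ i, j ≤ T`) equals `C A^{i−j−1} B` if `i > j` and `0` otherwise. -/
def Pmat (n p m T : ℕ) (A : Matrix (Fin n) (Fin n) ℝ) (B : Matrix (Fin n) (Fin p) ℝ)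
    (C : Matrix (Fin m) (Fin n) ℝ) :
    Matrix (Fin (T + 1) × Fin m) (Fin (T + 1) × Fin p) ℝ :=
  fun ir jc =>
    if (jc.1 : ℕ) < (ir.1 : ℕ) then (C * A ^ ((ir.1 : ℕ) - (jc.1 : ℕ) - 1) * B) ir.2 jc.2 else 0

/-- The positive semidefinite square root of a positive semidefinite matrix, as defined in the
older Mathlib (`Matrix.PosSemidef.sqrt`, since removed in favour of `CFC.sqrt`). -/
noncomputable def Matrix.PosSemidef.sqrt {ι : Type*} [Fintype ι]
    [DecidableEq ι] {M : Matrix ι ι ℝ} (hM : M.PosSemidef) : Matrix ι ι ℝ :=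
  hM.1.eigenvectorUnitary * Matrix.diagonal (Real.sqrt ∘ hM.1.eigenvalues) *
    (star hM.1.eigenvectorUnitary : Matrix ι ι ℝ)

lemma aux_psd_sqrt_mul_self {n : ℕ} {M : Matrix (Fin n) (Fin n) ℝ} (hM : M.PosSemidef) :
    hM.sqrt * hM.sqrt = M := by
  have hU : (star hM.1.eigenvectorUnitary : Matrix (Fin n) (Fin n) ℝ)
      * (hM.1.eigenvectorUnitary : Matrix (Fin n) (Fin n) ℝ) = 1 :=
    Unitary.star_mul_self_of_mem hM.1.eigenvectorUnitary.2
  have hD : Matrix.diagonal (Real.sqrt ∘ hM.1.eigenvalues)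
      * Matrix.diagonal (Real.sqrt ∘ hM.1.eigenvalues)
      = Matrix.diagonal (RCLike.ofReal ∘ hM.1.eigenvalues) := by
    rw [Matrix.diagonal_mul_diagonal]; congr 1; funext i
    simp [Real.mul_self_sqrt (hM.eigenvalues_nonneg i)]
  conv_rhs => rw [hM.1.spectral_theorem, Unitary.conjStarAlgAut_apply]
  unfold Matrix.PosSemidef.sqrt
  rw [← hD]
  calc _ = (hM.1.eigenvectorUnitary : Matrix (Fin n) (Fin n) ℝ)
        * Matrix.diagonal (Real.sqrt ∘ hM.1.eigenvalues)
        * ((star hM.1.eigenvectorUnitary : Matrix (Fin n) (Fin n) ℝ)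
          * (hM.1.eigenvectorUnitary : Matrix (Fin n) (Fin n) ℝ))
        * Matrix.diagonal (Real.sqrt ∘ hM.1.eigenvalues)
        * (star hM.1.eigenvectorUnitary : Matrix (Fin n) (Fin n) ℝ) := by
          simp only [Matrix.mul_assoc]
    _ = _ := by rw [hU]; simp only [Matrix.mul_one, Matrix.mul_assoc]

lemma aux_psd_sqrt_transpose {n : ℕ} {M : Matrix (Fin n) (Fin n) ℝ} (hM : M.PosSemidef) :
    hM.sqrt.transpose = hM.sqrt := by
  rw [← Matrix.conjTranspose_eq_transpose_of_trivial]
  unfold Matrix.PosSemidef.sqrt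
  simp [Matrix.conjTranspose_mul, Matrix.star_eq_conjTranspose, Matrix.diagonal_conjTranspose,
    Matrix.mul_assoc]

section Aux
variable {Ω : Type*} [MeasureSpace Ω] [IsProbabilityMeasure (ℙ : Measure Ω)]

omit [IsProbabilityMeasure (ℙ : Measure Ω)] in
lemma aux_int_mul {f g : Ω → ℝ} (hf : MemLp f 2 ℙ) (hg : MemLp g 2 ℙ) :
    Integrable (fun ω => f ω * g ω) ℙ := by
  have h : MemLp (f • g) 1 ℙ := hg.smul hf (hpqr := ⟨by norm_num [ENNReal.inv_two_add_inv_two]⟩)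
  exact (memLp_one_iff_integrable.mp h)

omit [IsProbabilityMeasure (ℙ : Measure Ω)] in
lemma aux_indep_coord {d e : ℕ} {f : Ω → Fin d → ℝ} {g : Ω → Fin e → ℝ}
    (h : IndepFun (fun ω => embedVec d (f ω)) (fun ω => embedVec e (g ω)) ℙ)
    (a : Fin d) (b : Fin e) :
    IndepFun (fun ω => f ω a) (fun ω => g ω b) ℙ := by
  have h2 := h.comp (φ := fun v : ℕ → ℝ => v (a : ℕ)) (ψ := fun v : ℕ → ℝ => v (b : ℕ))
    (measurable_pi_apply (a : ℕ) : Measurable fun v : ℕ → ℝ => v (a : ℕ))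
    (measurable_pi_apply (b : ℕ) : Measurable fun v : ℕ → ℝ => v (b : ℕ))
  have e1 : ((fun v : ℕ → ℝ => v (a : ℕ)) ∘ fun ω => embedVec d (f ω)) = fun ω => f ω a := by
    funext ω; simp [Function.comp, embedVec, a.isLt]
  have e2 : ((fun v : ℕ → ℝ => v (b : ℕ)) ∘ fun ω => embedVec e (g ω)) = fun ω => g ω b := by
    funext ω; simp [Function.comp, embedVec, b.isLt]
  rwa [e1, e2] at h2

lemma aux_zero_cov {f g : Ω → ℝ} (h : IndepFun f g ℙ) (hf : MemLp f 2 ℙ) (hg : MemLp g 2 ℙ)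
    (hf0 : ∫ ω, f ω = 0) : ∫ ω, f ω * g ω = 0 := by
  have := h.integral_mul_eq_mul_integral hf.1 hg.1
  rw [show (∫ ω, f ω * g ω) = ∫ ω, (f * g) ω from rfl]
  rw [show (∫ ω, (f * g) ω) = ∫ ω, (f * g) ω ∂ℙ from rfl]
  rw [show (∫ ω, (f*g) ω ∂ℙ) = integral ℙ (f*g) from rfl, this, hf0, zero_mul]

end Aux

lemma aux_sum_range_ite {N s : ℕ} (hs : s ≤ N) (f : ℕ → ℝ) :
    ∑ i ∈ Finset.range N, (if i < s then f i else 0) = ∑ i ∈ Finset.range s, f i := by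
  rw [← Finset.sum_subset (Finset.range_subset_range.2 hs)
    (fun x _ hx => by rw [if_neg (by simpa using hx)])]
  exact Finset.sum_congr rfl fun x hx => by rw [if_pos (by simpa using hx)]

lemma aux_sqrt_helper {m n : ℕ} (M N : Matrix (Fin m) (Fin n) ℝ)
    (Q Sw : Matrix (Fin n) (Fin n) ℝ) (hQ : Q.transpose = Q) (hQQ : Q * Q = Sw) (a b : Fin m) :
    ∑ d, (M * Q) a d * (N * Q) b d = ∑ c, N b c * ∑ d, M a d * Sw d c := by
  have h1 : ∑ d, (M * Q) a d * (N * Q) b d = ((M * Q) * (N * Q).transpose) a b := by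
    simp only [Matrix.mul_apply, Matrix.transpose_apply]
  have h2 : ∑ c, N b c * ∑ d, M a d * Sw d c = ((M * Sw) * N.transpose) a b := by
    simp [Matrix.mul_apply, Matrix.transpose_apply, Finset.mul_sum, mul_comm, mul_left_comm]
  rw [h1, h2, Matrix.transpose_mul, hQ, ← Matrix.mul_assoc, Matrix.mul_assoc M Q Q, hQQ]

def GuM {n : ℕ} (p m : ℕ) (A : Matrix (Fin n) (Fin n) ℝ) (B : Matrix (Fin n) (Fin p) ℝ)
    (C : Matrix (Fin m) (Fin n) ℝ) (t s : ℕ) : Matrix (Fin m) (Fin p) ℝ :=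
  C * A ^ (t - s - 1) * B

def GwM {n : ℕ} (m : ℕ) (A : Matrix (Fin n) (Fin n) ℝ)
    (C : Matrix (Fin m) (Fin n) ℝ) (t s : ℕ) : Matrix (Fin m) (Fin n) ℝ :=
  C * A ^ (t - s - 1)

/-- (Formula for the joint input–observation covariance matrix.)  For a linear
dynamical system with `x 0 = 0` and `D = 0`, mutually independent mean-zero noise with
`E[u_t u_tᵀ] = I_p`, `E[z_t z_tᵀ] = I_m`, `E[w_t w_tᵀ] = Σ_w`, the covariance of the stacked
vector `ξ = (u_0, …, u_T, y_0, …, y_T)` equals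
`[I; P][I, Pᵀ] + [0; P_w][0, P_wᵀ] + blockdiag(0, I_{m(T+1)})`, where `P = P_T(A, B, C)` and
`P_w = P_T(A, Σ_w^{1/2}, C)` with `Σ_w^{1/2}` the positive semidefinite square root of `Σ_w`. -/
theorem joint_covariance_formula
    {Ω : Type*} [MeasureSpace Ω] [IsProbabilityMeasure (ℙ : Measure Ω)]
    (n p m : ℕ)
    (A : Matrix (Fin n) (Fin n) ℝ) (B : Matrix (Fin n) (Fin p) ℝ)
    (C : Matrix (Fin m) (Fin n) ℝ)
    (Sw : Matrix (Fin n) (Fin n) ℝ) (hSw : Sw.PosSemidef)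
    (x : ℕ → Ω → Fin n → ℝ) (u : ℕ → Ω → Fin p → ℝ) (w : ℕ → Ω → Fin n → ℝ)
    (z : ℕ → Ω → Fin m → ℝ) (y : ℕ → Ω → Fin m → ℝ)
    (hx0 : ∀ ω : Ω, x 0 ω = 0)
    (hx : ∀ (t : ℕ) (ω : Ω), x (t + 1) ω = A.mulVec (x t ω) + B.mulVec (u t ω) + w t ω)
    (hy : ∀ (t : ℕ) (ω : Ω), y t ω = C.mulVec (x t ω) + z t ω)
    (hmeasu : ∀ t, Measurable (u t)) (hmeasw : ∀ t, Measurable (w t))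
    (hmeasz : ∀ t, Measurable (z t))
    -- mutual independence of all the `u t`, `w t`, `z t`
    (hindep : iIndepFun
      (fun idx : ℕ × Fin 3 =>
        if idx.2 = 0 then fun ω => embedVec p (u idx.1 ω)
        else if idx.2 = 1 then fun ω => embedVec n (w idx.1 ω)
        else fun ω => embedVec m (z idx.1 ω)) ℙ)
    -- mean zero
    (humean : ∀ t a, ∫ ω, u t ω a = 0)
    (hwmean : ∀ t a, ∫ ω, w t ω a = 0)
    (hzmean : ∀ t a, ∫ ω, z t ω a = 0)
    -- finite second moments
    (humom : ∀ t a, MemLp (fun ω => u t ω a) 2 ℙ)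
    (hwmom : ∀ t a, MemLp (fun ω => w t ω a) 2 ℙ)
    (hzmom : ∀ t a, MemLp (fun ω => z t ω a) 2 ℙ)
    -- covariances
    (hucov : ∀ t (a b : Fin p), ∫ ω, u t ω a * u t ω b = if a = b then 1 else 0)
    (hzcov : ∀ t (a b : Fin m), ∫ ω, z t ω a * z t ω b = if a = b then 1 else 0)
    (hwcov : ∀ t (a b : Fin n), ∫ ω, w t ω a * w t ω b = Sw a b)
    (T : ℕ) :
    -- the stacked vector `ξ(ω) = (u_0(ω), …, u_T(ω), y_0(ω), …, y_T(ω))`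
    (Matrix.of fun i j : (Fin (T + 1) × Fin p) ⊕ (Fin (T + 1) × Fin m) =>
        ∫ ω, (Sum.elim (fun tp => u (tp.1 : ℕ) ω tp.2) (fun tm => y (tm.1 : ℕ) ω tm.2) i)
          * (Sum.elim (fun tp => u (tp.1 : ℕ) ω tp.2) (fun tm => y (tm.1 : ℕ) ω tm.2) j))
      = Matrix.fromBlocks 1 (Pmat n p m T A B C).transpose (Pmat n p m T A B C)
          (Pmat n p m T A B C * (Pmat n p m T A B C).transpose)
        + Matrix.fromBlocks 0 0 0
            (Pmat n n m T A hSw.sqrt C * (Pmat n n m T A hSw.sqrt C).transpose)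
        + Matrix.fromBlocks 0 0 0 1 := by
    classical
  -- pairwise independence of the embedded noise vectors
  have hIuu : ∀ {t s : ℕ}, t ≠ s →
      IndepFun (fun ω => embedVec p (u t ω)) (fun ω => embedVec p (u s ω)) ℙ := by
    intro t s hts
    have h := hindep.indepFun (i := (t, 0)) (j := (s, 0)) (by simp [hts])
    simpa using h
  have hIww : ∀ {t s : ℕ}, t ≠ s →
      IndepFun (fun ω => embedVec n (w t ω)) (fun ω => embedVec n (w s ω)) ℙ := by
    intro t s hts
    have h := hindep.indepFun (i := (t, 1)) (j := (s, 1)) (by simp [hts])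
    simpa using h
  have hIzz : ∀ {t s : ℕ}, t ≠ s →
      IndepFun (fun ω => embedVec m (z t ω)) (fun ω => embedVec m (z s ω)) ℙ := by
    intro t s hts
    have h := hindep.indepFun (i := (t, 2)) (j := (s, 2)) (by simp [hts])
    simpa [show ((2 : Fin 3) = 0) = False by simp, show ((2 : Fin 3) = 1) = False by simp] using h
  have hIuw : ∀ (t s : ℕ),
      IndepFun (fun ω => embedVec p (u t ω)) (fun ω => embedVec n (w s ω)) ℙ := by
    intro t s
    have h := hindep.indepFun (i := (t, 0)) (j := (s, 1)) (by simp)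
    simpa using h
  have hIuz : ∀ (t s : ℕ),
      IndepFun (fun ω => embedVec p (u t ω)) (fun ω => embedVec m (z s ω)) ℙ := by
    intro t s
    have h := hindep.indepFun (i := (t, 0)) (j := (s, 2)) (by simp)
    simpa [show ((2 : Fin 3) = 0) = False by simp, show ((2 : Fin 3) = 1) = False by simp] using h
  have hIwz : ∀ (t s : ℕ),
      IndepFun (fun ω => embedVec n (w t ω)) (fun ω => embedVec m (z s ω)) ℙ := by
    intro t s
    have h := hindep.indepFun (i := (t, 1)) (j := (s, 2)) (by simp)
    simpa [show ((2 : Fin 3) = 0) = False by simp, show ((2 : Fin 3) = 1) = False by simp] using h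
  -- scalar covariance identities
  have Iuu : ∀ (t s : ℕ) (a b : Fin p), (∫ ω, u t ω a * u s ω b)
      = if t = s then (if a = b then (1:ℝ) else 0) else 0 := by
    intro t s a b
    by_cases h : t = s
    · subst h; rw [hucov, if_pos rfl]
    · rw [if_neg h]
      exact aux_zero_cov (aux_indep_coord (hIuu h) a b) (humom t a) (humom s b) (humean t a)
  have Iww : ∀ (t s : ℕ) (a b : Fin n), (∫ ω, w t ω a * w s ω b)
      = if t = s then Sw a b else 0 := by
    intro t s a b
    by_cases h : t = s
    · subst h; rw [hwcov, if_pos rfl]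
    · rw [if_neg h]
      exact aux_zero_cov (aux_indep_coord (hIww h) a b) (hwmom t a) (hwmom s b) (hwmean t a)
  have Izz : ∀ (t s : ℕ) (a b : Fin m), (∫ ω, z t ω a * z s ω b)
      = if t = s then (if a = b then (1:ℝ) else 0) else 0 := by
    intro t s a b
    by_cases h : t = s
    · subst h; rw [hzcov, if_pos rfl]
    · rw [if_neg h]
      exact aux_zero_cov (aux_indep_coord (hIzz h) a b) (hzmom t a) (hzmom s b) (hzmean t a)
  have Iuw : ∀ (t s : ℕ) (a : Fin p) (b : Fin n), (∫ ω, u t ω a * w s ω b) = 0 := fun t s a b =>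
    aux_zero_cov (aux_indep_coord (hIuw t s) a b) (humom t a) (hwmom s b) (humean t a)
  have Iwu : ∀ (t s : ℕ) (a : Fin n) (b : Fin p), (∫ ω, w t ω a * u s ω b) = 0 := fun t s a b =>
    aux_zero_cov (aux_indep_coord (hIuw s t).symm a b) (hwmom t a) (humom s b) (hwmean t a)
  have Iuz : ∀ (t s : ℕ) (a : Fin p) (b : Fin m), (∫ ω, u t ω a * z s ω b) = 0 := fun t s a b =>
    aux_zero_cov (aux_indep_coord (hIuz t s) a b) (humom t a) (hzmom s b) (humean t a)
  have Izu : ∀ (t s : ℕ) (a : Fin m) (b : Fin p), (∫ ω, z t ω a * u s ω b) = 0 := fun t s a b =>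
    aux_zero_cov (aux_indep_coord (hIuz s t).symm a b) (hzmom t a) (humom s b) (hzmean t a)
  have Iwz : ∀ (t s : ℕ) (a : Fin n) (b : Fin m), (∫ ω, w t ω a * z s ω b) = 0 := fun t s a b =>
    aux_zero_cov (aux_indep_coord (hIwz t s) a b) (hwmom t a) (hzmom s b) (hwmean t a)
  have Izw : ∀ (t s : ℕ) (a : Fin m) (b : Fin n), (∫ ω, z t ω a * w s ω b) = 0 := fun t s a b =>
    aux_zero_cov (aux_indep_coord (hIwz s t).symm a b) (hzmom t a) (hwmom s b) (hzmean t a)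
  -- commuting products inside integrals
  have commInt : ∀ (f g : Ω → ℝ), (∫ ω, f ω * g ω) = ∫ ω, g ω * f ω := by
    intro f g; congr 1; funext ω; ring
  -- solution of the state recursion
  have hxf : ∀ (t : ℕ) (ω : Ω), x t ω
      = ∑ s ∈ Finset.range t, (A ^ (t - s - 1)).mulVec (B.mulVec (u s ω) + w s ω) := by
    intro t
    induction t with
    | zero => intro ω; simp [hx0]
    | succ t ih =>
      intro ω
      rw [hx t ω, ih ω, Finset.sum_range_succ]
      rw [show A.mulVec (∑ s ∈ Finset.range t,
            (A ^ (t - s - 1)).mulVec (B.mulVec (u s ω) + w s ω))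
          = ∑ s ∈ Finset.range t,
            A.mulVec ((A ^ (t - s - 1)).mulVec (B.mulVec (u s ω) + w s ω)) from
        map_sum A.mulVecLin _ _]
      have hterm : ∀ s ∈ Finset.range t,
          A.mulVec ((A ^ (t - s - 1)).mulVec (B.mulVec (u s ω) + w s ω))
          = (A ^ (t + 1 - s - 1)).mulVec (B.mulVec (u s ω) + w s ω) := by
        intro s hs
        rw [Matrix.mulVec_mulVec]
        have hst : s < t := Finset.mem_range.mp hs
        have he : t + 1 - s - 1 = (t - s - 1) + 1 := by omega
        rw [he, pow_succ']
      rw [Finset.sum_congr rfl hterm]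
      simp [add_assoc]
  -- coordinate formula for y
  have hyf : ∀ (t : ℕ) (ω : Ω) (b : Fin m), y t ω b
      = (∑ s ∈ Finset.range t,
          ((∑ c, GuM p m A B C t s b c * u s ω c) + ∑ c, GwM m A C t s b c * w s ω c))
        + z t ω b := by
    intro t ω b
    rw [hy t ω]
    show C.mulVec (x t ω) b + z t ω b = _
    congr 1
    rw [hxf t ω]
    rw [show C.mulVec (∑ s ∈ Finset.range t,
          (A ^ (t - s - 1)).mulVec (B.mulVec (u s ω) + w s ω))
        = ∑ s ∈ Finset.range t,
          C.mulVec ((A ^ (t - s - 1)).mulVec (B.mulVec (u s ω) + w s ω)) from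
      map_sum C.mulVecLin _ _]
    rw [Finset.sum_apply]
    refine Finset.sum_congr rfl fun s _ => ?_
    rw [Matrix.mulVec_mulVec, Matrix.mulVec_add, Matrix.mulVec_mulVec]
    show (GuM p m A B C t s).mulVec (u s ω) b + (GwM m A C t s).mulVec (w s ω) b = _
    simp [Matrix.mulVec, dotProduct]
  -- second moment of y
  have hymom : ∀ (t : ℕ) (b : Fin m), MemLp (fun ω => y t ω b) 2 ℙ := by
    intro t b
    have : (fun ω => y t ω b) = fun ω =>
        (∑ s ∈ Finset.range t,
          ((∑ c, GuM p m A B C t s b c * u s ω c) + ∑ c, GwM m A C t s b c * w s ω c))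
        + z t ω b := funext fun ω => hyf t ω b
    rw [this]
    refine MemLp.add ?_ (hzmom t b)
    refine memLp_finset_sum _ fun s _ => ?_
    refine MemLp.add ?_ ?_
    · exact memLp_finset_sum _ fun c _ => (humom s c).const_mul _
    · exact memLp_finset_sum _ fun c _ => (hwmom s c).const_mul _
  -- expansion of ∫ f · y
  have hexp : ∀ (f : Ω → ℝ), MemLp f 2 ℙ → ∀ (t : ℕ) (b : Fin m),
      (∫ ω, f ω * y t ω b) =
        (∑ s ∈ Finset.range t, ((∑ c, GuM p m A B C t s b c * ∫ ω, f ω * u s ω c)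
          + ∑ c, GwM m A C t s b c * ∫ ω, f ω * w s ω c))
        + ∫ ω, f ω * z t ω b := by
    intro f hf t b
    have hint_u : ∀ (s : ℕ) (c : Fin p), Integrable (fun ω => f ω * u s ω c) ℙ :=
      fun s c => aux_int_mul hf (humom s c)
    have hint_w : ∀ (s : ℕ) (c : Fin n), Integrable (fun ω => f ω * w s ω c) ℙ :=
      fun s c => aux_int_mul hf (hwmom s c)
    have hint_z : Integrable (fun ω => f ω * z t ω b) ℙ := aux_int_mul hf (hzmom t b)
    have step1 : (∫ ω, f ω * y t ω b)
        = ∫ ω, ((∑ s ∈ Finset.range t,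
            ((∑ c, GuM p m A B C t s b c * (f ω * u s ω c))
              + ∑ c, GwM m A C t s b c * (f ω * w s ω c)))
          + f ω * z t ω b) := by
      congr 1; funext ω
      rw [hyf t ω b, mul_add, Finset.mul_sum]
      congr 1
      refine Finset.sum_congr rfl fun s _ => ?_
      rw [mul_add, Finset.mul_sum, Finset.mul_sum]
      congr 1
      · exact Finset.sum_congr rfl fun c _ => by ring
      · exact Finset.sum_congr rfl fun c _ => by ring
    rw [step1]
    have hintsum : ∀ s ∈ Finset.range t, Integrable (fun ω =>
        (∑ c, GuM p m A B C t s b c * (f ω * u s ω c))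
          + ∑ c, GwM m A C t s b c * (f ω * w s ω c)) ℙ := by
      intro s _
      refine Integrable.add ?_ ?_
      · exact integrable_finset_sum _ fun c _ => (hint_u s c).const_mul _
      · exact integrable_finset_sum _ fun c _ => (hint_w s c).const_mul _
    rw [integral_add (integrable_finset_sum _ hintsum) hint_z]
    congr 1
    rw [integral_finset_sum _ hintsum]
    refine Finset.sum_congr rfl fun s hs => ?_
    rw [integral_add (integrable_finset_sum _ fun c _ => (hint_u s c).const_mul _)
      (integrable_finset_sum _ fun c _ => (hint_w s c).const_mul _)]
    congr 1
    · rw [integral_finset_sum _ fun c _ => (hint_u s c).const_mul _]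
      exact Finset.sum_congr rfl fun c _ => integral_const_mul _ _
    · rw [integral_finset_sum _ fun c _ => (hint_w s c).const_mul _]
      exact Finset.sum_congr rfl fun c _ => integral_const_mul _ _
  -- the three basic mixed covariances with y
  have Huy : ∀ (t : ℕ) (a : Fin p) (s : ℕ) (b : Fin m),
      (∫ ω, u t ω a * y s ω b) = if t < s then GuM p m A B C s t b a else 0 := by
    intro t a s b
    rw [hexp (fun ω => u t ω a) (humom t a) s b]
    have e1 : ∀ r ∈ Finset.range s,
        ((∑ c, GuM p m A B C s r b c * ∫ ω, u t ω a * u r ω c)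
          + ∑ c, GwM m A C s r b c * ∫ ω, u t ω a * w r ω c)
        = if r = t then GuM p m A B C s t b a else 0 := by
      intro r _
      have h2 : (∑ c, GwM m A C s r b c * ∫ ω, u t ω a * w r ω c) = 0 := by
        simp [Iuw]
      rw [h2, add_zero]
      by_cases hrt : r = t
      · subst hrt
        simp [Iuu, Finset.sum_ite_eq]
      · simp [Iuu, Ne.symm hrt, hrt]
    rw [Finset.sum_congr rfl e1, Iuz, add_zero, Finset.sum_ite_eq' (Finset.range s) t]
    simp [Finset.mem_range]
  have Hwy : ∀ (t : ℕ) (a : Fin n) (s : ℕ) (b : Fin m),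
      (∫ ω, w t ω a * y s ω b) = if t < s then ∑ c, GwM m A C s t b c * Sw a c else 0 := by
    intro t a s b
    rw [hexp (fun ω => w t ω a) (hwmom t a) s b]
    have e1 : ∀ r ∈ Finset.range s,
        ((∑ c, GuM p m A B C s r b c * ∫ ω, w t ω a * u r ω c)
          + ∑ c, GwM m A C s r b c * ∫ ω, w t ω a * w r ω c)
        = if r = t then ∑ c, GwM m A C s t b c * Sw a c else 0 := by
      intro r _
      have h2 : (∑ c, GuM p m A B C s r b c * ∫ ω, w t ω a * u r ω c) = 0 := by
        simp [Iwu]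
      rw [h2, zero_add]
      by_cases hrt : r = t
      · subst hrt
        simp [Iww]
      · simp [Iww, Ne.symm hrt, hrt]
    rw [Finset.sum_congr rfl e1, Iwz, add_zero, Finset.sum_ite_eq' (Finset.range s) t]
    simp [Finset.mem_range]
  have Hzy : ∀ (t : ℕ) (a : Fin m) (s : ℕ) (b : Fin m),
      (∫ ω, z t ω a * y s ω b) = if t = s then (if a = b then (1:ℝ) else 0) else 0 := by
    intro t a s b
    rw [hexp (fun ω => z t ω a) (hzmom t a) s b]
    have e1 : ∀ r ∈ Finset.range s,
        ((∑ c, GuM p m A B C s r b c * ∫ ω, z t ω a * u r ω c)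
          + ∑ c, GwM m A C s r b c * ∫ ω, z t ω a * w r ω c) = 0 := by
      intro r _
      simp [Izu, Izw]
    rw [Finset.sum_congr rfl e1, Izz]
    simp
  -- covariance of two y's
  have Hyy : ∀ (t : ℕ) (a : Fin m) (s : ℕ) (b : Fin m),
      (∫ ω, y t ω a * y s ω b)
        = ((∑ r ∈ Finset.range s,
            if r < t then ∑ c, GuM p m A B C s r b c * GuM p m A B C t r a c else 0)
          + ∑ r ∈ Finset.range s,
            if r < t then ∑ c, GwM m A C s r b c * ∑ d, GwM m A C t r a d * Sw c d else 0)
          + (if t = s then (if a = b then (1:ℝ) else 0) else 0) := by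
    intro t a s b
    rw [hexp (fun ω => y t ω a) (hymom t a) s b]
    have e1 : ∀ r ∈ Finset.range s,
        ((∑ c, GuM p m A B C s r b c * ∫ ω, y t ω a * u r ω c)
          + ∑ c, GwM m A C s r b c * ∫ ω, y t ω a * w r ω c)
        = (if r < t then ∑ c, GuM p m A B C s r b c * GuM p m A B C t r a c else 0)
          + (if r < t then ∑ c, GwM m A C s r b c * ∑ d, GwM m A C t r a d * Sw c d else 0) := by
      intro r _
      congr 1
      · have hc : ∀ c, (∫ ω, y t ω a * u r ω c)
            = if r < t then GuM p m A B C t r a c else 0 := by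
          intro c; rw [commInt]; exact Huy r c t a
        by_cases hrt : r < t
        · simp only [hc, if_pos hrt]
        · simp [hc, if_neg hrt]
      · have hc : ∀ c, (∫ ω, y t ω a * w r ω c)
            = if r < t then ∑ d, GwM m A C t r a d * Sw c d else 0 := by
          intro c; rw [commInt]; exact Hwy r c t a
        by_cases hrt : r < t
        · simp only [hc, if_pos hrt]
        · simp [hc, if_neg hrt]
    rw [Finset.sum_congr rfl e1, Finset.sum_add_distrib]
    congr 1
    rw [commInt, Hzy s b t a]
    by_cases h : t = s
    · subst h; simp [eq_comm (a := a) (b := b)]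
    · simp [h, Ne.symm h]
  -- symmetry of Sw and of its square root
  have hSwsymm : ∀ c d, Sw c d = Sw d c := fun c d => by simpa using (hSw.1.apply c d).symm
  have hQt : hSw.sqrt.transpose = hSw.sqrt :=
    aux_psd_sqrt_transpose hSw
  -- finish: compare entries
  ext i j
  rcases i with tp | tm <;> rcases j with sp | sm
  · rcases tp with ⟨t, a⟩; rcases sp with ⟨s, b⟩
    simp only [Matrix.of_apply, Sum.elim_inl, Matrix.add_apply,
      Matrix.fromBlocks_apply₁₁, Matrix.zero_apply, add_zero]
    rw [Iuu, Matrix.one_apply]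
    simp only [Prod.mk.injEq, ite_and, Fin.val_inj]
  · rcases tp with ⟨t, a⟩; rcases sm with ⟨s, b⟩
    simp only [Matrix.of_apply, Sum.elim_inl, Sum.elim_inr, Matrix.add_apply,
      Matrix.fromBlocks_apply₁₂, Matrix.zero_apply, add_zero]
    rw [Huy, Matrix.transpose_apply]
    rfl
  · rcases tm with ⟨t, a⟩; rcases sp with ⟨s, b⟩
    simp only [Matrix.of_apply, Sum.elim_inl, Sum.elim_inr, Matrix.add_apply,
      Matrix.fromBlocks_apply₂₁, Matrix.zero_apply, add_zero]
    rw [commInt, Huy]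
    rfl
  · rcases tm with ⟨t, a⟩; rcases sm with ⟨s, b⟩
    simp only [Matrix.of_apply, Sum.elim_inr, Matrix.add_apply,
      Matrix.fromBlocks_apply₂₂]
    rw [Hyy]
    congr 1
    · congr 1
      · -- the u-driven part equals (P Pᵀ) entry
        rw [Matrix.mul_apply]
        have key : ∀ r : ℕ,
            (∑ c : Fin p, (if r < (t:ℕ) then GuM p m A B C (t:ℕ) r a c else 0)
              * (if r < (s:ℕ) then GuM p m A B C (s:ℕ) r b c else 0))
            = if r < (s:ℕ) then
                (if r < (t:ℕ) then
                  ∑ c, GuM p m A B C (s:ℕ) r b c * GuM p m A B C (t:ℕ) r a c else 0)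
              else 0 := by
          intro r
          by_cases h1 : r < (s:ℕ) <;> by_cases h2 : r < (t:ℕ) <;>
            simp [h1, h2]
          exact Finset.sum_congr rfl fun c _ => mul_comm _ _
        calc (∑ r ∈ Finset.range (s:ℕ), if r < (t:ℕ) then
                ∑ c, GuM p m A B C (s:ℕ) r b c * GuM p m A B C (t:ℕ) r a c else 0)
            = ∑ r ∈ Finset.range (T+1), (if r < (s:ℕ) then
                (if r < (t:ℕ) then
                  ∑ c, GuM p m A B C (s:ℕ) r b c * GuM p m A B C (t:ℕ) r a c else 0) else 0) :=
              (aux_sum_range_ite (Nat.le_of_lt_succ (Nat.lt_succ_of_lt s.isLt)) _).symm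
          _ = ∑ r : Fin (T+1), (if (r:ℕ) < (s:ℕ) then
                (if (r:ℕ) < (t:ℕ) then
                  ∑ c, GuM p m A B C (s:ℕ) (r:ℕ) b c * GuM p m A B C (t:ℕ) (r:ℕ) a c else 0)
                else 0) := (Fin.sum_univ_eq_sum_range _ _).symm
          _ = ∑ rc : Fin (T+1) × Fin p,
                Pmat n p m T A B C (t, a) rc * (Pmat n p m T A B C).transpose rc (s, b) := by
              rw [Fintype.sum_prod_type]
              exact Finset.sum_congr rfl fun r _ => (key (r:ℕ)).symm
      · -- the w-driven part equals (P_w P_wᵀ) entry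
        rw [Matrix.mul_apply]
        have key : ∀ r : ℕ,
            (∑ d : Fin n, (if r < (t:ℕ) then (GwM m A C (t:ℕ) r * hSw.sqrt) a d else 0)
              * (if r < (s:ℕ) then (GwM m A C (s:ℕ) r * hSw.sqrt) b d else 0))
            = if r < (s:ℕ) then
                (if r < (t:ℕ) then
                  ∑ c, GwM m A C (s:ℕ) r b c * ∑ d, GwM m A C (t:ℕ) r a d * Sw c d else 0)
              else 0 := by
          intro r
          by_cases h1 : r < (s:ℕ) <;> by_cases h2 : r < (t:ℕ) <;>
            simp [h1, h2]
          rw [aux_sqrt_helper (GwM m A C (t:ℕ) r) (GwM m A C (s:ℕ) r) hSw.sqrt Sw hQt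
            (aux_psd_sqrt_mul_self hSw) a b]
          refine Finset.sum_congr rfl fun c _ => ?_
          congr 1
          exact Finset.sum_congr rfl fun d _ => by rw [hSwsymm d c]
        calc (∑ r ∈ Finset.range (s:ℕ), if r < (t:ℕ) then
                ∑ c, GwM m A C (s:ℕ) r b c * ∑ d, GwM m A C (t:ℕ) r a d * Sw c d else 0)
            = ∑ r ∈ Finset.range (T+1), (if r < (s:ℕ) then
                (if r < (t:ℕ) then
                  ∑ c, GwM m A C (s:ℕ) r b c * ∑ d, GwM m A C (t:ℕ) r a d * Sw c d else 0)
                else 0) :=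
              (aux_sum_range_ite (Nat.le_of_lt_succ (Nat.lt_succ_of_lt s.isLt)) _).symm
          _ = ∑ r : Fin (T+1), (if (r:ℕ) < (s:ℕ) then
                (if (r:ℕ) < (t:ℕ) then
                  ∑ c, GwM m A C (s:ℕ) (r:ℕ) b c * ∑ d, GwM m A C (t:ℕ) (r:ℕ) a d * Sw c d
                  else 0) else 0) := (Fin.sum_univ_eq_sum_range _ _).symm
          _ = ∑ rc : Fin (T+1) × Fin n,
                Pmat n n m T A hSw.sqrt C (t, a) rc
                  * (Pmat n n m T A hSw.sqrt C).transpose rc (s, b) := by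
              rw [Fintype.sum_prod_type]
              exact Finset.sum_congr rfl fun r _ => (key (r:ℕ)).symm
    · rw [Matrix.one_apply]
      simp only [Prod.mk.injEq, ite_and, Fin.val_inj]
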